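/- arXiv:2208.14157 — 2 statements merged into one kernel-verified Lean document; each statement's English description precedes it below -/
import Mathlib

section
/- Suppose for a stationary solution u^e the reconstruction satisfies P_i(x_{i±1/2}) = u^e(x_{i±1/2}) and P_i(x_i^m) = u^e(x_i^m) for all cells when applied to the exact cell averages ū_i^e = Σ_m α_m u^e(x_i^m), and the numerical flux 𝔽 is such that 𝔽(v,v) = f(v). Then the right-hand side L_i = −(F_{i+1/2} − F_{i−1/2})/Δx + (f(u^e(x_{i+1/2})) − f(u^e(x_{i−1/2})))/Δx + Σ_m α_m (S(P_i(x_i^m)) − S(u^e(x_i^m))) H_x(x_i^m) vanishes for every i, so {ū_i^e} is an equilibrium of the semi-discrete scheme. -/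
/-- If the reconstruction is exactly well-balanced for a stationary solution `ue`
and the numerical flux is consistent, then the semi-discrete right-hand side
vanishes: the stationary cell averages are an equilibrium of the scheme. -/
theorem semidiscrete_rhs_vanishes_for_stationary_data
    (N M : ℕ) (Δx : ℝ) (hΔx : Δx ≠ 0)
    -- intercell points and quadrature nodes/weights
    (xhalf : ℤ → ℝ) (xq : ℤ → Fin M → ℝ) (w : Fin M → ℝ)
    -- flux, source, H_x and consistent numerical flux
    (f S : (Fin N → ℝ) → (Fin N → ℝ)) (Hx : ℝ → ℝ)
    (𝔽 : (Fin N → ℝ) → (Fin N → ℝ) → (Fin N → ℝ))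
    (h𝔽 : ∀ v, 𝔽 v v = f v)
    -- stationary solution and exactly well-balanced reconstructions
    (ue : ℝ → (Fin N → ℝ)) (P : ℤ → ℝ → (Fin N → ℝ))
    (hPl : ∀ i : ℤ, P i (xhalf i) = ue (xhalf i))
    (hPr : ∀ i : ℤ, P i (xhalf (i + 1)) = ue (xhalf (i + 1)))
    (hPq : ∀ i : ℤ, ∀ m : Fin M, P i (xq i m) = ue (xq i m))
    -- intercell fluxes and semi-discrete right-hand side
    (F : ℤ → (Fin N → ℝ))
    (hF : ∀ i : ℤ, F i = 𝔽 (P i (xhalf (i + 1))) (P (i + 1) (xhalf (i + 1))))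
    (L : ℤ → (Fin N → ℝ))
    (hL : ∀ i : ℤ, L i =
      -((1 / Δx) • (F i - F (i - 1)))
      + (1 / Δx) • (f (ue (xhalf (i + 1))) - f (ue (xhalf i)))
      + ∑ m, (w m * Hx (xq i m)) • (S (P i (xq i m)) - S (ue (xq i m)))) :
    ∀ i : ℤ, L i = 0 := by
  have hFval : ∀ i : ℤ, F i = f (ue (xhalf (i + 1))) := by
    intro i
    rw [hF i, hPr i]
    have := hPl (i + 1)
    rw [this, h𝔽]
  intro i
  rw [hL i, hFval i, hFval (i - 1)]
  have : (i : ℤ) - 1 + 1 = i := by ring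
  rw [this]
  have hsum : (∑ m, (w m * Hx (xq i m)) • (S (P i (xq i m)) - S (ue (xq i m)))) = 0 := by
    apply Finset.sum_eq_zero
    intro m _
    rw [hPq i m, sub_self, smul_zero]
  rw [hsum]
  abel
end

section
/- Conversely, if q is a nonzero constant and h : I → (0,∞) is differentiable with q²/(2h(x)²) + g(h(x) − H(x)) constant on an interval I, and gh(x) ≠ u(x)² on I (non-critical flow), then (h, q) is a stationary solution of the frictionless shallow water system: (−u² + gh)h' = ghH' with u = q/h. -/
/-- Converse: if the Bernoulli invariant `E = q²/(2h²) + g(h − H)` is constant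
on an open interval, with nonzero constant discharge `q`, positive depth and
non-critical flow, then `(−u² + gh) h' = g h H'` there. -/
theorem shallow_water_constant_energy_implies_stationary
    (g q Econst a b : ℝ) (hq : q ≠ 0) (h H : ℝ → ℝ)
    (hh : Differentiable ℝ h) (hH : Differentiable ℝ H)
    (hpos : ∀ x ∈ Set.Ioo a b, 0 < h x)
    (hnoncrit : ∀ x ∈ Set.Ioo a b, g * h x ≠ (q / h x) ^ 2)
    (hE : ∀ x ∈ Set.Ioo a b,
      q ^ 2 / (2 * (h x) ^ 2) + g * (h x - H x) = Econst) :
    ∀ x ∈ Set.Ioo a b,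
      (-(q / h x) ^ 2 + g * h x) * deriv h x = g * h x * deriv H x := by
  intro x hx
  have hx0 : h x ≠ 0 := (hpos x hx).ne'
  have hnb : Set.Ioo a b ∈ nhds x := isOpen_Ioo.mem_nhds hx
  have heq : (fun y => q ^ 2 / (2 * (h y) ^ 2) + g * (h y - H y))
      =ᶠ[nhds x] fun _ => Econst := by
    filter_upwards [hnb] with y hy using hE y hy
  have h1 : HasDerivAt h (deriv h x) x := (hh x).hasDerivAt
  have h2 : HasDerivAt H (deriv H x) x := (hH x).hasDerivAt
  have hD : HasDerivAt (fun y => 2 * (h y) ^ 2)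
      (2 * (2 * h x ^ 1 * deriv h x)) x := by
    have := h1.pow 2
    simpa using this.const_mul 2
  have hden : 2 * (h x) ^ 2 ≠ 0 := by positivity
  have hq2 : HasDerivAt (fun y => q ^ 2 / (2 * (h y) ^ 2))
      ((0 * (2 * (h x) ^ 2) - q ^ 2 * (2 * (2 * h x ^ 1 * deriv h x)))
        / (2 * (h x) ^ 2) ^ 2) x :=
    (hasDerivAt_const x (q ^ 2)).div hD hden
  have hF : HasDerivAt (fun y => q ^ 2 / (2 * (h y) ^ 2) + g * (h y - H y))
      ((0 * (2 * (h x) ^ 2) - q ^ 2 * (2 * (2 * h x ^ 1 * deriv h x)))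
        / (2 * (h x) ^ 2) ^ 2 + g * (deriv h x - deriv H x)) x :=
    hq2.add ((h1.sub h2).const_mul g)
  have hz : (0 * (2 * (h x) ^ 2) - q ^ 2 * (2 * (2 * h x ^ 1 * deriv h x)))
        / (2 * (h x) ^ 2) ^ 2 + g * (deriv h x - deriv H x) = 0 := by
    rw [← hF.deriv, Filter.EventuallyEq.deriv_eq heq]
    simp
  have hxp := hpos x hx
  field_simp at hz ⊢
  have key : (2 : ℝ) * (deriv h x * (-q ^ 2 + h x ^ 3 * g))
      = (2 : ℝ) * (h x ^ 3 * g * deriv H x) := by linear_combination hz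
  exact mul_left_cancel₀ (by positivity) key
end
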